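/- Let k ≥ 2 and n be integers with n ≥ 3k, n even, and k dividing n. Let G be the simple graph on n vertices consisting of two disjoint complete graphs A and B, each on n/2 vertices, together with a matching of n/k edges joining n/k distinct vertices of A to n/k distinct vertices of B. If G' is a random k-out subgraph of G, then the probability that no matching edge belongs to G' is at least 3^(−6); consequently, the expected number of inter-component edges of G with respect to G' is at least 3^(−6)·n/k. -/

import Mathlib

set_option maxHeartbeats 1000000


open Finset

variable {V : Type*}

/-- The set of legal choices of one vertex `v` in the random `k`-out model:
`v` picks a set of exactly `min k (deg v)` of its neighbours. -/
abbrev kOutChoice [Fintype V] [DecidableEq V] (G : SimpleGraph V) [DecidableRel G.Adj]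
    (k : ℕ) (v : V) :=
  {A : Finset V // A ⊆ G.neighborFinset v ∧ A.card = min k (G.degree v)}

/-- The sample space of the random `k`-out model: every vertex independently and
uniformly picks a legal choice; the uniform measure on this finite product space
is exactly the joint distribution of the vertices' independent uniform choices. -/
abbrev kOutSpace [Fintype V] [DecidableEq V] (G : SimpleGraph V) [DecidableRel G.Adj]
    (k : ℕ) :=
  ∀ v : V, kOutChoice G k v

/-- The random `k`-out subgraph determined by an outcome `ω`: an edge is present
iff it was chosen by at least one of its endpoints. -/
def kOutGraph [Fintype V] [DecidableEq V] (G : SimpleGraph V) [DecidableRel G.Adj]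
    (k : ℕ) (ω : kOutSpace G k) : SimpleGraph V :=
  SimpleGraph.fromRel (fun u v => v ∈ (ω u).1)

/-- The number of edges of `G` whose endpoints lie in different connected
components of `H` (the inter-component edges of `G` with respect to `H`). -/
noncomputable def interCompCount (G H : SimpleGraph V) : ℕ :=
  Set.ncard {e : Sym2 V | e ∈ G.edgeSet ∧ ∀ u v : V, e = s(u, v) → ¬ H.Reachable u v}

/-- The expected number of inter-component edges of `G` with respect to a random
`k`-out subgraph of `G`: the average over the (uniform) finite sample space. -/
noncomputable def kOutExpect [Fintype V] [DecidableEq V] (G : SimpleGraph V)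
    [DecidableRel G.Adj] (k : ℕ) : ℝ :=
  (∑ ω : kOutSpace G k, (interCompCount G (kOutGraph G k ω) : ℝ)) /
    (Fintype.card (kOutSpace G k) : ℝ)

section aux

lemma card_choice_avoid [Fintype V] [DecidableEq V] (G : SimpleGraph V) [DecidableRel G.Adj]
    (k : ℕ) (v x : V) :
    Fintype.card {c : kOutChoice G k v // x ∉ c.1} =
      (((G.neighborFinset v).erase x).card).choose (min k (G.degree v)) := by
  classical
  rw [← Finset.card_powersetCard, ← Fintype.card_coe]
  refine Fintype.card_congr ?_
  refine (Equiv.subtypeSubtypeEquivSubtypeInter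
    (fun A : Finset V => A ⊆ G.neighborFinset v ∧ A.card = min k (G.degree v))
    (fun A => x ∉ A)).trans (Equiv.subtypeEquivRight ?_)
  intro A
  simp only [Finset.mem_powersetCard, Finset.subset_erase]
  tauto

lemma card_choice [Fintype V] [DecidableEq V] (G : SimpleGraph V) [DecidableRel G.Adj]
    (k : ℕ) (v : V) :
    Fintype.card (kOutChoice G k v) = (G.degree v).choose (min k (G.degree v)) := by
  classical
  rw [show (G.degree v).choose (min k (G.degree v)) =
      ((G.neighborFinset v).powersetCard (min k (G.degree v))).card from
    (Finset.card_powersetCard _ _).symm, ← Fintype.card_coe]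
  refine Fintype.card_congr (Equiv.subtypeEquivRight ?_)
  intro A
  simp [Finset.mem_powersetCard]

lemma ncard_pi_event [Fintype V] [DecidableEq V] (G : SimpleGraph V) [DecidableRel G.Adj]
    (k : ℕ) (p : ∀ v : V, kOutChoice G k v → Prop) :
    Set.ncard {ω : kOutSpace G k | ∀ v, p v (ω v)} =
      ∏ v, Nat.card {c : kOutChoice G k v // p v c} := by
  classical
  rw [← Nat.card_coe_set_eq]
  exact (Nat.card_congr (Equiv.subtypePiEquivPi (p := p))).trans Nat.card_pi

lemma choose_ratio (d k : ℕ) (hd : 0 < d) :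
    d * (d - 1).choose k = d.choose k * (d - k) := by
  have h1 : d * (d - 1).choose k = (d-1).succ * (d-1).choose k := by
    congr 1; omega
  rw [h1, Nat.add_one_mul_choose_eq, ← Nat.choose_succ_right_eq]
  have : d - 1 + 1 = d := by omega
  rw [this]

lemma analytic_pow (t : ℕ) (ht : 3 ≤ t) :
    (3 : ℝ) ^ (-6 : ℤ) ≤ (((t : ℝ) - 2) / t) ^ (2 * t) := by
  rcases Nat.lt_or_ge t 6 with h | h
  · interval_cases t <;> norm_num
  · have h6 : (6:ℝ) ≤ t := by exact_mod_cast h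
    have ht0 : (0:ℝ) < (t:ℝ) - 2 := by linarith
    have htt : (0:ℝ) < (t:ℝ) := by positivity
    have key : ((t : ℝ) / ((t:ℝ) - 2)) ^ (2 * t) ≤ 729 := by
      have h2 : (t : ℝ) / ((t:ℝ)-2) ≤ Real.exp (2/((t:ℝ)-2)) := by
        rw [show (t : ℝ) / ((t:ℝ)-2) = 2/((t:ℝ)-2) + 1 by field_simp; ring]
        exact Real.add_one_le_exp _
      calc ((t : ℝ) / ((t:ℝ) - 2)) ^ (2 * t)
          ≤ (Real.exp (2/((t:ℝ)-2))) ^ (2*t) := by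
            apply pow_le_pow_left₀ (by positivity) h2
        _ = Real.exp ((2*t : ℕ) * (2/((t:ℝ)-2))) := by
            rw [Real.exp_nat_mul]
        _ ≤ Real.exp 6 := by
            apply Real.exp_le_exp.mpr
            rw [mul_div_assoc', div_le_iff₀ ht0]
            push_cast
            nlinarith
        _ ≤ 729 := by
            have he : Real.exp 6 = Real.exp 1 ^ 6 := by
              rw [← Real.exp_nat_mul]; norm_num
            have h1 : Real.exp 1 ^ 6 < 2.7182818286 ^ 6 :=
              pow_lt_pow_left₀ Real.exp_one_lt_d9 (Real.exp_pos 1).le (by norm_num)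
            rw [he]
            nlinarith
    have hb : (0:ℝ) < ((t : ℝ) / ((t:ℝ) - 2)) ^ (2 * t) := by positivity
    have hinv : (((t : ℝ) - 2) / t) ^ (2 * t) = (((t:ℝ) / ((t:ℝ)-2)) ^ (2*t))⁻¹ := by
      rw [← inv_pow, inv_div]
    rw [hinv, show ((3:ℝ) ^ (-6:ℤ)) = (729:ℝ)⁻¹ by norm_num]
    exact inv_anti₀ hb key

lemma card_filter_lt (n m : ℕ) (h : m ≤ n) :
    ((univ : Finset (Fin n)).filter fun w : Fin n => (w:ℕ) < m).card = m := by
  rw [← Fintype.card_fin m, ← Finset.card_univ]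
  apply Finset.card_bij (fun (a : Fin n) ha => (⟨a.1, by simpa using ha⟩ : Fin m))
  · intro a ha; exact mem_univ _
  · intro a ha b hb hab
    have : (a:ℕ) = b := by simpa using hab
    exact Fin.ext this
  · intro b _; exact ⟨⟨b.1, lt_of_lt_of_le b.2 h⟩, by simp [b.2], rfl⟩

end aux

/-- Let `k ≥ 2`, `n ≥ 3k` with `n` even and `k ∣ n`, and let `G`
be the graph on `Fin n` consisting of two disjoint cliques `A = {u : u < n/2}` and
`B = {u : u ≥ n/2}`, each on `n/2` vertices, joined by the matching
`{u, u + n/2}` for `u < n/k`.  Then a random `k`-out subgraph `G'` of `G`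
contains no matching edge with probability at least `3⁻⁶`, and consequently the
expected number of inter-component edges of `G` w.r.t. `G'` is at least `3⁻⁶·n/k`. -/
theorem kOut_two_cliques_matching_lower_bound
    (n k : ℕ) (hk : 2 ≤ k) (hn : 3 * k ≤ n) (hne : Even n) (hdvd : k ∣ n)
    (G : SimpleGraph (Fin n)) [DecidableRel G.Adj]
    (hG : ∀ u v : Fin n, G.Adj u v ↔ u ≠ v ∧
      (((u : ℕ) < n / 2 ∧ (v : ℕ) < n / 2) ∨
       (n / 2 ≤ (u : ℕ) ∧ n / 2 ≤ (v : ℕ)) ∨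
       ((v : ℕ) = (u : ℕ) + n / 2 ∧ (u : ℕ) < n / k) ∨
       ((u : ℕ) = (v : ℕ) + n / 2 ∧ (v : ℕ) < n / k))) :
    (3 : ℝ) ^ (-6 : ℤ) ≤
      (Set.ncard {ω : kOutSpace G k | ∀ u v : Fin n,
          (v : ℕ) = (u : ℕ) + n / 2 → (u : ℕ) < n / k →
          ¬ (kOutGraph G k ω).Adj u v} : ℝ) /
        (Fintype.card (kOutSpace G k) : ℝ) ∧
      (3 : ℝ) ^ (-6 : ℤ) * n / k ≤ kOutExpect G k := by
  classical
  set m := n / 2 with hm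
  set t := n / k with htdef
  have hk0 : 0 < k := by omega
  have hkt : k * t = n := Nat.mul_div_cancel' hdvd
  obtain ⟨r, hr⟩ := hne
  have hm2 : 2 * m = n := by omega
  have ht3 : 3 ≤ t := (Nat.le_div_iff_mul_le hk0).mpr (by omega)
  have htm : t ≤ m := by
    have h1 : 2 * t ≤ k * t := Nat.mul_le_mul_right t hk
    omega
  have hkm : k + 1 ≤ m := by omega
  have hmn : m < n := by omega
  -- the partner function
  set par : Fin n → Fin n := fun u =>
    if h : (u : ℕ) < t then ⟨(u : ℕ) + m, by omega⟩
    else if h2 : m ≤ (u : ℕ) ∧ (u : ℕ) < m + t then ⟨(u : ℕ) - m, by omega⟩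
    else u with hpar
  -- matched vertices
  set Mset : Finset (Fin n) :=
    univ.filter (fun v : Fin n => (v : ℕ) < t ∨ (m ≤ (v : ℕ) ∧ (v : ℕ) < m + t)) with hMset
  have hmem_Mset : ∀ v : Fin n,
      v ∈ Mset ↔ ((v : ℕ) < t ∨ (m ≤ (v : ℕ) ∧ (v : ℕ) < m + t)) := by
    intro v; simp [hMset]
  -- values of par
  have hpar_lt : ∀ v : Fin n, (v : ℕ) < t → (par v : ℕ) = (v : ℕ) + m := by
    intro v hv; simp [hpar, hv]
  have hpar_hi : ∀ v : Fin n, m ≤ (v : ℕ) → (v : ℕ) < m + t → (par v : ℕ) = (v : ℕ) - m := by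
    intro v h1 h2
    have : ¬ ((v : ℕ) < t) := by omega
    simp [hpar, this, h1, h2]
  have hpar_self : ∀ v : Fin n, v ∉ Mset → par v = v := by
    intro v hv
    rw [hmem_Mset] at hv
    have h1 : ¬ ((v : ℕ) < t) := fun h => hv (Or.inl h)
    have h2 : ¬ (m ≤ (v : ℕ) ∧ (v : ℕ) < m + t) := fun h => hv (Or.inr h)
    simp [hpar, h1, h2]
  -- the event as a product event
  set Event : Set (kOutSpace G k) := {ω : kOutSpace G k | ∀ u v : Fin n,
      (v : ℕ) = (u : ℕ) + m → (u : ℕ) < t →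
      ¬ (kOutGraph G k ω).Adj u v} with hEventDef
  have hAdjIff : ∀ (ω : kOutSpace G k) (u v : Fin n),
      (kOutGraph G k ω).Adj u v ↔ u ≠ v ∧ (v ∈ (ω u).1 ∨ u ∈ (ω v).1) := by
    intro ω u v
    simp [kOutGraph, SimpleGraph.fromRel_adj]
  have hsubG : ∀ (ω : kOutSpace G k) (u v : Fin n),
      (kOutGraph G k ω).Adj u v → G.Adj u v := by
    intro ω u v h
    rw [hAdjIff] at h
    rcases h.2 with h' | h'
    · exact (SimpleGraph.mem_neighborFinset G u v).mp ((ω u).2.1 h')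
    · exact ((SimpleGraph.mem_neighborFinset G v u).mp ((ω v).2.1 h')).symm
  have hself_not : ∀ (ω : kOutSpace G k) (v : Fin n), v ∉ (ω v).1 := by
    intro ω v hv
    exact (G.notMem_neighborFinset_self v) ((ω v).2.1 hv)
  have hEvent : Event = {ω : kOutSpace G k | ∀ v, par v ∉ (ω v).1} := by
    ext ω
    simp only [hEventDef, Set.mem_setOf_eq]
    constructor
    · intro hω v
      rcases Nat.lt_or_ge (v : ℕ) t with hv | hv
      · intro hmem
        have hne' : (par v : ℕ) = (v : ℕ) + m := hpar_lt v hv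
        refine hω v (par v) hne' hv ?_
        rw [hAdjIff]
        refine ⟨?_, Or.inl hmem⟩
        intro hEq
        have := congrArg Fin.val hEq
        omega
      · rcases Nat.lt_or_ge (v : ℕ) (m + t) with hv2 | hv2
        · rcases Nat.lt_or_ge (v : ℕ) m with hv3 | hv3
          · -- t ≤ v < m :  v unmatched, par v = v
            have : par v = v := by
              apply hpar_self
              rw [hmem_Mset]; omega
            rw [this]; exact hself_not ω v
          · -- m ≤ v < m + t : matched on B side
            intro hmem
            have hne' : (par v : ℕ) = (v : ℕ) - m := hpar_hi v hv3 hv2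
            refine hω (par v) v (by omega) (by omega) ?_
            rw [hAdjIff]
            refine ⟨?_, Or.inr hmem⟩
            intro hEq
            have := congrArg Fin.val hEq
            omega
        · have : par v = v := by
            apply hpar_self
            rw [hmem_Mset]; omega
          rw [this]; exact hself_not ω v
    · intro hω u v hvu hut hadj
      rw [hAdjIff] at hadj
      rcases hadj.2 with h' | h'
      · have : par u = v := by
          apply Fin.ext
          rw [hpar_lt u hut, hvu]
        rw [← this] at h'
        exact hω u h'
      · have : par v = u := by
          apply Fin.ext
          rw [hpar_hi v (by omega) (by omega)]
          omega
        rw [← this] at h'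
        exact hω v h'
  -- side sets and degrees
  have hlt_card : ((univ : Finset (Fin n)).filter fun w : Fin n => (w:ℕ) < m).card = m :=
    card_filter_lt n m (by omega)
  have hge_card : ((univ : Finset (Fin n)).filter fun w : Fin n => ¬ ((w:ℕ) < m)).card = m := by
    have h1 := Finset.card_filter_add_card_filter_not
      (s := (univ : Finset (Fin n))) (p := fun w : Fin n => (w:ℕ) < m)
    simp only [Finset.card_univ, Fintype.card_fin] at h1
    omega
  have hsame_sub : ∀ v : Fin n,
      (univ.filter fun w : Fin n => w ≠ v ∧ ((w:ℕ) < m ↔ (v:ℕ) < m)) ⊆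
        G.neighborFinset v := by
    intro v w hw
    simp only [Finset.mem_filter, Finset.mem_univ, true_and] at hw
    rw [SimpleGraph.mem_neighborFinset, hG]
    refine ⟨Ne.symm hw.1, ?_⟩
    rcases Nat.lt_or_ge (v : ℕ) m with hv | hv
    · exact Or.inl ⟨hv, hw.2.mpr hv⟩
    · refine Or.inr (Or.inl ⟨hv, ?_⟩)
      by_contra hcon
      exact absurd (hw.2.mp (by omega)) (by omega)
  have hsame_card : ∀ v : Fin n,
      (univ.filter fun w : Fin n => w ≠ v ∧ ((w:ℕ) < m ↔ (v:ℕ) < m)).card = m - 1 := by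
    intro v
    rcases Nat.lt_or_ge (v : ℕ) m with hv | hv
    · have heq : (univ.filter fun w : Fin n => w ≠ v ∧ ((w:ℕ) < m ↔ (v:ℕ) < m)) =
          ((univ : Finset (Fin n)).filter fun w : Fin n => (w:ℕ) < m).erase v := by
        ext w
        simp only [Finset.mem_filter, Finset.mem_erase, Finset.mem_univ, true_and]
        constructor
        · rintro ⟨h1, h2⟩; exact ⟨h1, h2.mpr hv⟩
        · rintro ⟨h1, h2⟩; exact ⟨h1, by tauto⟩
      rw [heq, Finset.card_erase_of_mem (by simp [hv]), hlt_card]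
    · have heq : (univ.filter fun w : Fin n => w ≠ v ∧ ((w:ℕ) < m ↔ (v:ℕ) < m)) =
          ((univ : Finset (Fin n)).filter fun w : Fin n => ¬ ((w:ℕ) < m)).erase v := by
        ext w
        simp only [Finset.mem_filter, Finset.mem_erase, Finset.mem_univ, true_and]
        constructor
        · rintro ⟨h1, h2⟩
          refine ⟨h1, fun hcon => ?_⟩
          exact absurd (h2.mp hcon) (by omega)
        · rintro ⟨h1, h2⟩
          exact ⟨h1, by constructor <;> intro <;> omega⟩
      rw [heq, Finset.card_erase_of_mem (by simp; omega), hge_card]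
  have hdeg_ge : ∀ v : Fin n, m - 1 ≤ G.degree v := by
    intro v
    rw [← SimpleGraph.card_neighborFinset_eq_degree, ← hsame_card v]
    exact Finset.card_le_card (hsame_sub v)
  have hmink : ∀ v : Fin n, min k (G.degree v) = k := by
    intro v
    exact min_eq_left (le_trans (by omega) (hdeg_ge v))
  have hpar_adj : ∀ v ∈ Mset, G.Adj v (par v) := by
    intro v hv
    rw [hmem_Mset] at hv
    rw [hG]
    rcases hv with hv | hv
    · have hp := hpar_lt v hv
      refine ⟨fun hEq => by rw [← hEq] at hp; omega, ?_⟩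
      exact Or.inr (Or.inr (Or.inl ⟨hp, hv⟩))
    · have hp := hpar_hi v hv.1 hv.2
      refine ⟨fun hEq => by rw [← hEq] at hp; omega, ?_⟩
      exact Or.inr (Or.inr (Or.inr ⟨by omega, by omega⟩))
  have hpar_mem : ∀ v ∈ Mset, par v ∈ G.neighborFinset v := by
    intro v hv
    rw [SimpleGraph.mem_neighborFinset]
    exact hpar_adj v hv
  have hdeg_matched : ∀ v ∈ Mset, m ≤ G.degree v := by
    intro v hv
    have hpns : par v ∉ (univ.filter fun w : Fin n => w ≠ v ∧ ((w:ℕ) < m ↔ (v:ℕ) < m)) := by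
      simp only [Finset.mem_filter, Finset.mem_univ, true_and, not_and]
      intro _
      rw [hmem_Mset] at hv
      rcases hv with hv | hv
      · rw [hpar_lt v hv]
        omega
      · rw [hpar_hi v hv.1 hv.2]
        omega
    have hins : insert (par v) (univ.filter fun w : Fin n => w ≠ v ∧ ((w:ℕ) < m ↔ (v:ℕ) < m))
        ⊆ G.neighborFinset v := by
      rw [Finset.insert_subset_iff]
      exact ⟨hpar_mem v hv, hsame_sub v⟩
    have := Finset.card_le_card hins
    rw [Finset.card_insert_of_notMem hpns, hsame_card v] at this
    rw [← SimpleGraph.card_neighborFinset_eq_degree]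
    omega
  -- cardinality of Mset
  have hMcard : Mset.card = 2 * t := by
    have h1 : Mset.card =
        ((Finset.range n).filter fun x => x < t ∨ (m ≤ x ∧ x < m + t)).card := by
      apply Finset.card_bij (fun (a : Fin n) _ => (a : ℕ))
      · intro a ha
        rw [hmem_Mset] at ha
        simp only [Finset.mem_filter, Finset.mem_range]
        exact ⟨a.2, ha⟩
      · intro a _ b _ hab
        exact Fin.ext hab
      · intro b hb
        simp only [Finset.mem_filter, Finset.mem_range] at hb
        exact ⟨⟨b, hb.1⟩, by rw [hmem_Mset]; exact hb.2, rfl⟩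
    have h2 : ((Finset.range n).filter fun x => x < t ∨ (m ≤ x ∧ x < m + t)) =
        Finset.range t ∪ Finset.Ico m (m + t) := by
      ext x
      simp only [Finset.mem_filter, Finset.mem_range, Finset.mem_union, Finset.mem_Ico]
      omega
    have h3 : Disjoint (Finset.range t) (Finset.Ico m (m + t)) := by
      rw [Finset.disjoint_left]
      intro x hx hx2
      simp only [Finset.mem_range] at hx
      simp only [Finset.mem_Ico] at hx2
      omega
    rw [h1, h2, Finset.card_union_of_disjoint h3, Finset.card_range, Nat.card_Ico]
    omega
  -- counting
  have hEcard : (Set.ncard Event : ℕ) =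
      ∏ v : Fin n, (((G.neighborFinset v).erase (par v)).card).choose k := by
    rw [hEvent, ncard_pi_event G k (fun v c => par v ∉ c.1)]
    refine Finset.prod_congr rfl fun v _ => ?_
    rw [Nat.card_eq_fintype_card, card_choice_avoid, hmink]
  have hNcard : Fintype.card (kOutSpace G k) = ∏ v : Fin n, (G.degree v).choose k := by
    rw [Fintype.card_pi]
    refine Finset.prod_congr rfl fun v _ => ?_
    rw [card_choice, hmink]
  have hNpos : 0 < Fintype.card (kOutSpace G k) := by
    rw [hNcard]
    apply Finset.prod_pos
    intro v _
    exact Nat.choose_pos (le_trans (by omega) (hdeg_ge v))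
  -- real probability lower bound
  have hq : (k:ℝ) * t = 2 * m := by exact_mod_cast (by omega : k * t = 2 * m)
  have hm0 : (0:ℝ) < m := by
    have : 0 < m := by omega
    exact_mod_cast this
  have hprob : (3 : ℝ) ^ (-6 : ℤ) ≤
      (Set.ncard Event : ℝ) / (Fintype.card (kOutSpace G k) : ℝ) := by
    have hbpos : ∀ v : Fin n, (0:ℝ) < ((G.degree v).choose k : ℝ) := by
      intro v
      exact_mod_cast Nat.choose_pos (le_trans (by omega) (hdeg_ge v))
    have hav : ∀ v ∈ Mset,
        (((m:ℝ) - k)/m) ≤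
          ((((G.neighborFinset v).erase (par v)).card).choose k : ℝ) /
            ((G.degree v).choose k : ℝ) := by
      intro v hv
      have hd : m ≤ G.degree v := hdeg_matched v hv
      have hd0 : 0 < G.degree v := by omega
      have hkd : k ≤ G.degree v := by omega
      have hcard_erase : ((G.neighborFinset v).erase (par v)).card = G.degree v - 1 := by
        rw [Finset.card_erase_of_mem (hpar_mem v hv),
          SimpleGraph.card_neighborFinset_eq_degree]
      have hid := choose_ratio (G.degree v) k hd0
      have hidR : (G.degree v : ℝ) * ((G.degree v - 1).choose k : ℝ)
          = ((G.degree v).choose k : ℝ) * ((G.degree v : ℝ) - k) := by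
        have := congrArg (Nat.cast (R := ℝ)) hid
        push_cast [Nat.cast_sub hkd] at this
        exact this
      have hdR : (0:ℝ) < (G.degree v : ℝ) := by exact_mod_cast hd0
      have heq2 : ((((G.neighborFinset v).erase (par v)).card).choose k : ℝ) /
            ((G.degree v).choose k : ℝ)
          = ((G.degree v : ℝ) - k) / (G.degree v : ℝ) := by
        rw [hcard_erase, div_eq_div_iff (ne_of_gt (hbpos v)) (ne_of_gt hdR)]
        linarith [hidR]
      rw [heq2, div_le_div_iff₀ hm0 hdR]
      have hmd : (m:ℝ) ≤ (G.degree v : ℝ) := by exact_mod_cast hd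
      have hkR : (0:ℝ) ≤ (k:ℝ) := by positivity
      nlinarith
    have hav' : ∀ v ∈ (univ : Finset (Fin n)), v ∉ Mset →
        ((((G.neighborFinset v).erase (par v)).card).choose k : ℝ) /
            ((G.degree v).choose k : ℝ) = 1 := by
      intro v _ hv
      rw [hpar_self v hv,
        Finset.erase_eq_of_notMem (G.notMem_neighborFinset_self v),
        SimpleGraph.card_neighborFinset_eq_degree]
      exact div_self (ne_of_gt (hbpos v))
    have hcm : ((t:ℝ) - 2)/t = ((m:ℝ) - k)/m := by
      have htR : (0:ℝ) < (t:ℝ) := by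
        have : 0 < t := by omega
        exact_mod_cast this
      rw [div_eq_div_iff (ne_of_gt htR) (ne_of_gt hm0)]
      ring_nf
      nlinarith [hq]
    rw [hEcard, hNcard]
    push_cast [Nat.cast_prod]
    rw [← Finset.prod_div_distrib]
    calc (3 : ℝ) ^ (-6 : ℤ)
        ≤ (((t:ℝ) - 2)/t) ^ (2 * t) := analytic_pow t ht3
      _ = (((m:ℝ) - k)/m) ^ (2 * t) := by rw [hcm]
      _ = ∏ v : Fin n, (if v ∈ Mset then ((m:ℝ) - k)/m else 1) := by
          rw [Finset.prod_ite_mem, Finset.univ_inter, Finset.prod_const, hMcard]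
      _ ≤ ∏ v : Fin n,
            ((((G.neighborFinset v).erase (par v)).card).choose k : ℝ) /
              ((G.degree v).choose k : ℝ) := by
          apply Finset.prod_le_prod
          · intro v _
            split
            · apply div_nonneg _ (le_of_lt hm0)
              have : (k:ℝ) ≤ m := by exact_mod_cast (by omega : k ≤ m)
              linarith
            · norm_num
          · intro v _
            by_cases hv : v ∈ Mset
            · rw [if_pos hv]; exact hav v hv
            · rw [if_neg hv, hav' v (mem_univ v) hv]
  refine ⟨hprob, ?_⟩
  -- side preservation on the event
  have hside : ∀ ω ∈ Event, ∀ x y : Fin n,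
      (kOutGraph G k ω).Adj x y → ((x:ℕ) < m ↔ (y:ℕ) < m) := by
    intro ω hω x y hadj
    have hGadj := hsubG ω x y hadj
    rw [hG] at hGadj
    rcases hGadj.2 with h | h | h | h
    · omega
    · omega
    · exact absurd hadj (hω x y h.1 h.2)
    · exact absurd hadj.symm (hω y x h.1 h.2)
  have hreach : ∀ ω ∈ Event, ∀ x y : Fin n,
      (kOutGraph G k ω).Reachable x y → ((x:ℕ) < m ↔ (y:ℕ) < m) := by
    intro ω hω x y hr'
    obtain ⟨w⟩ := hr'
    induction w with
    | nil => exact Iff.rfl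
    | cons h p ih => exact (hside ω hω _ _ h).trans ih
  have hICC : ∀ ω ∈ Event, t ≤ interCompCount G (kOutGraph G k ω) := by
    intro ω hω
    set F : Finset (Sym2 (Fin n)) :=
      (univ.filter fun u : Fin n => (u:ℕ) < t).image (fun u => s(u, par u)) with hF
    have hFcard : F.card = t := by
      rw [hF, Finset.card_image_of_injOn, card_filter_lt n t (by omega)]
      intro u hu v hv h
      have hut : (u:ℕ) < t := by simpa using hu
      have hvt : (v:ℕ) < t := by simpa using hv
      rw [Sym2.eq_iff] at h
      rcases h with ⟨h1, _⟩ | ⟨h1, h2⟩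
      · exact h1
      · exfalso
        have := congrArg Fin.val h1
        rw [hpar_lt v hvt] at this
        omega
    have hsub2 : (↑F : Set (Sym2 (Fin n))) ⊆ {e : Sym2 (Fin n) | e ∈ G.edgeSet ∧
        ∀ u v : Fin n, e = s(u, v) → ¬ (kOutGraph G k ω).Reachable u v} := by
      intro e he
      rw [hF] at he
      simp only [Finset.coe_image, Set.mem_image, Finset.mem_coe, Finset.mem_filter,
        Finset.coe_filter, Set.mem_setOf_eq, Finset.mem_univ, true_and] at he
      obtain ⟨u, hut, rfl⟩ := he
      have huM : u ∈ Mset := by rw [hmem_Mset]; exact Or.inl hut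
      refine ⟨(SimpleGraph.mem_edgeSet G).mpr (hpar_adj u huM), ?_⟩
      intro a b heq hre
      have hiff : ((a:ℕ) < m ↔ (b:ℕ) < m) := hreach ω hω a b hre
      have hup : (u:ℕ) < m := by omega
      have hpp : ¬ ((par u : ℕ) < m) := by rw [hpar_lt u hut]; omega
      rw [Sym2.eq_iff] at heq
      rcases heq with ⟨h1, h2⟩ | ⟨h1, h2⟩
      · rw [← h1, ← h2] at hiff
        exact hpp (hiff.mp hup)
      · rw [← h1, ← h2] at hiff
        exact hpp (hiff.mpr hup)
    calc t = F.card := hFcard.symm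
      _ = (↑F : Set (Sym2 (Fin n))).ncard := (Set.ncard_coe_finset F).symm
      _ ≤ _ := Set.ncard_le_ncard hsub2 (Set.toFinite _)
  -- expectation bound
  have hNposR : (0:ℝ) < (Fintype.card (kOutSpace G k) : ℝ) := by exact_mod_cast hNpos
  have hfin : Event.Finite := Set.toFinite _
  have hsum : (Set.ncard Event : ℝ) * t ≤
      ∑ ω : kOutSpace G k, (interCompCount G (kOutGraph G k ω) : ℝ) := by
    rw [Set.ncard_eq_toFinset_card Event hfin]
    calc ((hfin.toFinset.card : ℝ)) * t = ∑ _ω ∈ hfin.toFinset, (t : ℝ) := by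
          rw [Finset.sum_const, nsmul_eq_mul]
      _ ≤ ∑ ω ∈ hfin.toFinset, (interCompCount G (kOutGraph G k ω) : ℝ) := by
          apply Finset.sum_le_sum
          intro ω hω
          exact_mod_cast hICC ω (hfin.mem_toFinset.mp hω)
      _ ≤ ∑ ω : kOutSpace G k, (interCompCount G (kOutGraph G k ω) : ℝ) := by
          apply Finset.sum_le_sum_of_subset_of_nonneg (Finset.subset_univ _)
          intro ω _ _
          positivity
  have hnk : (3:ℝ) ^ (-6:ℤ) * n / k = (3:ℝ) ^ (-6:ℤ) * t := by
    rw [mul_div_assoc]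
    congr 1
    rw [div_eq_iff (by positivity : (k:ℝ) ≠ 0)]
    have : (k:ℝ) * t = n := by exact_mod_cast hkt
    linarith
  rw [hnk, kOutExpect]
  calc (3:ℝ) ^ (-6:ℤ) * t
      ≤ ((Set.ncard Event : ℝ) / (Fintype.card (kOutSpace G k) : ℝ)) * t := by
        apply mul_le_mul_of_nonneg_right hprob
        positivity
    _ = ((Set.ncard Event : ℝ) * t) / (Fintype.card (kOutSpace G k) : ℝ) := by
        ring
    _ ≤ _ := by
        apply div_le_div_of_nonneg_right ?_ hNposR.le
        exact hsum
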